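/- For every positive integer n, (2n² + 1)/(3n) ≤ V(n) ≤ 2n(n+2)/(3(n+1)). The lower bound is attained iff n is a power of 2, and the upper bound is attained iff n = 2^{m+1} - 1 for some m ≥ 0. -/

import Mathlib

open Finset

/-- The largest odd divisor of `k`. -/
def oddPart (k : ℕ) : ℕ := ordCompl[2] k

/-- `V n = ∑_{k=1}^n α(k)/k` as a rational number. -/
def V (n : ℕ) : ℚ := ∑ k ∈ Finset.Icc 1 n, (oddPart k : ℚ) / k

/-- `v n = V n - 2n/3`. -/
def v (n : ℕ) : ℚ := V n - 2 * n / 3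

/-- `U n = ∑_{k=1}^n α(k)`. -/
def U (n : ℕ) : ℕ := ∑ k ∈ Finset.Icc 1 n, oddPart k

/-- `G n = ∑_{k=1}^n (n+1-k)·α(k)/k` as a rational number. -/
def G (n : ℕ) : ℚ := ∑ k ∈ Finset.Icc 1 n, ((n : ℚ) + 1 - k) * (oddPart k : ℚ) / k

/-- `g n = n(n+2)/3 - G n`. -/
def g (n : ℕ) : ℚ := n * (n + 2) / 3 - G n

lemma oddPart_odd {k : ℕ} (h : Odd k) : oddPart k = k := by
  unfold oddPart
  rw [Nat.factorization_eq_zero_of_not_dvd (by simpa using h.not_two_dvd_nat)]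
  simp

lemma oddPart_two_mul (k : ℕ) : oddPart (2*k) = oddPart k := by
  rcases Nat.eq_zero_or_pos k with rfl | hk
  · rfl
  · unfold oddPart
    rw [Nat.ordCompl_mul]
    norm_num

lemma V_zero : V 0 = 0 := by simp [V]

lemma V_succ (n : ℕ) : V (n+1) = V n + (oddPart (n+1) : ℚ) / (n+1) := by
  unfold V
  rw [Finset.sum_Icc_succ_top (by omega)]
  push_cast
  ring

lemma V_two_mul (k : ℕ) : V (2*k) = k + V k / 2 := by
  induction k with
  | zero => simp [V_zero]
  | succ j ih =>
    have h1 : 2 * (j+1) = (2*j+1) + 1 := by ring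
    rw [h1, V_succ, show 2*j+1 = (2*j)+1 from rfl, V_succ, ih, V_succ]
    have h2 : oddPart (2*j+1) = 2*j+1 := oddPart_odd ⟨j, by ring⟩
    have h3 : oddPart (2*j+1+1) = oddPart (j+1) := by
      rw [show 2*j+1+1 = 2*(j+1) from by ring, oddPart_two_mul]
    rw [h2, h3]
    have h4 : ((2*j+1 : ℕ) : ℚ) ≠ 0 := by push_cast; positivity
    have h5 : ((j+1 : ℕ) : ℚ) ≠ 0 := by push_cast; positivity
    push_cast at h4 h5 ⊢
    field_simp
    ring

lemma V_two_mul_add_one (k : ℕ) : V (2*k+1) = (k+1) + V k / 2 := by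
  rw [V_succ, V_two_mul, oddPart_odd ⟨k, by ring⟩]
  have h4 : ((2*k+1 : ℕ) : ℚ) ≠ 0 := by push_cast; positivity
  push_cast at h4 ⊢
  field_simp
  ring

lemma v_two_mul (k : ℕ) : v (2*k) = v k / 2 := by
  unfold v; rw [V_two_mul]; push_cast; ring

lemma v_two_mul_add_one (k : ℕ) : v (2*k+1) = v k / 2 + 1/3 := by
  unfold v; rw [V_two_mul_add_one]; push_cast; ring

lemma v_one : v 1 = 1/3 := by
  have := v_two_mul_add_one 0
  simpa [v, V_zero] using this

lemma key : ∀ n : ℕ, 0 < n →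
    (1/(3*(n:ℚ)) ≤ v n ∧ (v n = 1/(3*(n:ℚ)) ↔ ∃ m : ℕ, n = 2^m)) ∧
    (v n ≤ 2*(n:ℚ)/(3*((n:ℚ)+1)) ∧ (v n = 2*(n:ℚ)/(3*((n:ℚ)+1)) ↔ ∃ m : ℕ, n = 2^(m+1)-1)) := by
  intro n
  induction n using Nat.strong_induction_on with
  | _ n ih =>
  intro hn
  rcases eq_or_lt_of_le (show 1 ≤ n from hn) with h1 | h1
  · rw [← h1]
    refine ⟨⟨by norm_num [v_one], ⟨fun _ => ⟨0, rfl⟩, fun _ => by norm_num [v_one]⟩⟩,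
            ⟨by norm_num [v_one], ⟨fun _ => ⟨0, by norm_num⟩, fun _ => by norm_num [v_one]⟩⟩⟩
  · rcases Nat.even_or_odd n with ⟨k, hk⟩ | ⟨k, hk⟩
    · -- n = 2k even
      have hk2 : n = 2*k := by omega
      subst hk2
      have hkpos : 0 < k := by omega
      obtain ⟨⟨hA, hB⟩, hC, hD⟩ := ih k (by omega) hkpos
      rw [v_two_mul]
      have hkQ : (1:ℚ) ≤ k := by exact_mod_cast hkpos
      have hkQ0 : (0:ℚ) < k := by linarith
      push_cast
      have e1 : (1:ℚ)/(3*(2*k)) = (1/(3*(k:ℚ)))/2 := by field_simp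
      have ha : 0 < v k := lt_of_lt_of_le (by positivity) hA
      have h23 : v k < 2/3 := by
        have h2 : 2*(k:ℚ)/(3*(k+1)) < 2/3 := by
          rw [div_lt_div_iff₀ (by positivity) (by norm_num)]; nlinarith
        linarith
      have hstrict : v k / 2 < 2*(2*(k:ℚ))/(3*(2*k+1)) := by
        rw [div_lt_div_iff₀ (by norm_num) (by positivity)]
        have hC' : v k * (3*((k:ℚ)+1)) ≤ 2*k := (le_div_iff₀ (by positivity)).mp hC
        nlinarith [mul_lt_mul_of_pos_right h23 hkQ0]
      refine ⟨⟨by linarith [e1, hA], ?_⟩, ⟨le_of_lt hstrict, ?_⟩⟩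
      · constructor
        · intro h
          have hvk : v k = 1/(3*(k:ℚ)) := by rw [e1] at h; linarith
          obtain ⟨m, hm⟩ := hB.mp hvk
          exact ⟨m+1, by rw [pow_succ]; omega⟩
        · rintro ⟨m, hm⟩
          have hm1 : m ≠ 0 := by rintro rfl; omega
          obtain ⟨j, rfl⟩ := Nat.exists_eq_succ_of_ne_zero hm1
          rw [pow_succ] at hm
          have := hB.mpr ⟨j, by omega⟩
          rw [this, e1]
      · constructor
        · intro h; exact absurd h (ne_of_lt hstrict)
        · rintro ⟨m, hm⟩
          exfalso
          have hp : 2^(m+1) = 2^m*2 := pow_succ 2 m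
          have h1m : 1 ≤ 2^m := Nat.one_le_two_pow
          omega
    · -- n = 2k+1 odd
      subst hk
      have hkpos : 0 < k := by omega
      obtain ⟨⟨hA, hB⟩, hC, hD⟩ := ih k (by omega) hkpos
      rw [v_two_mul_add_one]
      have hkQ : (1:ℚ) ≤ k := by exact_mod_cast hkpos
      have hkQ0 : (0:ℚ) < k := by linarith
      push_cast
      have ha : 0 < v k := lt_of_lt_of_le (by positivity) hA
      have hstrict1 : 1/(3*(2*(k:ℚ)+1)) < v k / 2 + 1/3 := by
        rw [div_lt_iff₀ (by positivity)]
        nlinarith [mul_pos ha hkQ0]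
      have e2 : 2*(2*(k:ℚ)+1)/(3*((2*(k:ℚ)+1)+1)) = (2*(k:ℚ)/(3*((k:ℚ)+1)))/2 + 1/3 := by
        have hne : (k:ℚ)+1 ≠ 0 := by positivity
        field_simp
        ring
      refine ⟨⟨le_of_lt hstrict1, ?_⟩, ⟨by linarith [e2, hC], ?_⟩⟩
      · constructor
        · intro h; exact absurd h.symm (ne_of_lt hstrict1)
        · rintro ⟨m, hm⟩
          exfalso
          rcases Nat.eq_zero_or_pos m with rfl | hmp
          · simp at hm; omega
          · obtain ⟨j, rfl⟩ := Nat.exists_eq_succ_of_ne_zero (by omega : m ≠ 0)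
            rw [pow_succ] at hm
            omega
      · constructor
        · intro h
          have hvk : v k = 2*(k:ℚ)/(3*((k:ℚ)+1)) := by linarith [e2, h]
          obtain ⟨m, hm⟩ := hD.mp hvk
          refine ⟨m+1, ?_⟩
          have hp : 2^(m+1+1) = 2^(m+1)*2 := pow_succ 2 (m+1)
          have h1m : 1 ≤ 2^(m+1) := Nat.one_le_two_pow
          omega
        · rintro ⟨m, hm⟩
          have hp : 2^(m+1) = 2^m*2 := pow_succ 2 m
          have h1m : 1 ≤ 2^m := Nat.one_le_two_pow
          have hm0 : m ≠ 0 := by rintro rfl; omega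
          obtain ⟨j, rfl⟩ := Nat.exists_eq_succ_of_ne_zero hm0
          have hkj : k = 2^(j+1) - 1 := by
            rw [pow_succ] at hp hm
            omega
          have := hD.mpr ⟨j, hkj⟩
          linarith [e2, this]

theorem stmt8 (n : ℕ) (hn : 0 < n) :
    ((2 * n ^ 2 + 1 : ℚ) / (3 * n) ≤ V n ∧ V n ≤ 2 * n * (n + 2) / (3 * (n + 1))) ∧
      (V n = (2 * n ^ 2 + 1 : ℚ) / (3 * n) ↔ ∃ m : ℕ, n = 2 ^ m) ∧
      (V n = 2 * n * (n + 2) / (3 * (n + 1)) ↔ ∃ m : ℕ, n = 2 ^ (m + 1) - 1) := by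
  obtain ⟨⟨hA, hB⟩, hC, hD⟩ := key n hn
  have hnQ : (0:ℚ) < n := by exact_mod_cast hn
  have hv : V n = v n + 2*(n:ℚ)/3 := by unfold v; ring
  have el : (2*(n:ℚ)^2+1)/(3*(n:ℚ)) = 2*(n:ℚ)/3 + 1/(3*(n:ℚ)) := by
    field_simp
  have eu : 2*(n:ℚ)*((n:ℚ)+2)/(3*((n:ℚ)+1)) = 2*(n:ℚ)/3 + 2*(n:ℚ)/(3*((n:ℚ)+1)) := by
    have : (n:ℚ)+1 ≠ 0 := by positivity
    field_simp; ring
  refine ⟨⟨by linarith, by linarith⟩, ?_, ?_⟩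
  · constructor
    · intro h; exact hB.mp (by linarith)
    · intro h; have := hB.mpr h; linarith
  · constructor
    · intro h; exact hD.mp (by linarith)
    · intro h; have := hD.mpr h; linarith
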